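/- Let p be an odd prime, let u ∈ 𝔽_p with u ≠ 0, u ≠ 1, u ≠ −1, let A ∈ SL(2, 𝔽_p) be the diagonal matrix with entries u and u⁻¹, and let B ∈ SL(2, 𝔽_p). Suppose there exists X ∈ SL(2, 𝔽_p) with X A X⁻¹ = A⁻¹ and X B X⁻¹ = B. Then tr(A B A⁻¹ B⁻¹) − 2 is a square in 𝔽_p, i.e. there exists w ∈ 𝔽_p with tr(A B A⁻¹ B⁻¹) − 2 = w². -/
import Mathlib

theorem conjugating_inverse_forces_square (p : ℕ) (hp : p.Prime) (hodd : p ≠ 2) (u : ZMod p)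
    (hu0 : u ≠ 0) (hu1 : u ≠ 1) (hum1 : u ≠ -1)
    (A B : Matrix.SpecialLinearGroup (Fin 2) (ZMod p))
    (hA : (A : Matrix (Fin 2) (Fin 2) (ZMod p)) = !![u, 0; 0, u⁻¹])
    (hX : ∃ X : Matrix.SpecialLinearGroup (Fin 2) (ZMod p),
      X * A * X⁻¹ = A⁻¹ ∧ X * B * X⁻¹ = B) :
    ∃ w : ZMod p,
      Matrix.trace ((A * B * A⁻¹ * B⁻¹ : Matrix.SpecialLinearGroup (Fin 2) (ZMod p)) :
        Matrix (Fin 2) (Fin 2) (ZMod p)) - 2 = w ^ 2 := by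
  haveI : Fact p.Prime := ⟨hp⟩
  obtain ⟨X, hXA, hXB⟩ := hX
  have hAinv : ((A⁻¹ : Matrix.SpecialLinearGroup (Fin 2) (ZMod p)) :
      Matrix (Fin 2) (Fin 2) (ZMod p)) = !![u⁻¹, 0; 0, u] := by
    rw [Matrix.SpecialLinearGroup.coe_inv, hA, Matrix.adjugate_fin_two]
    simp
  have hBinv : ((B⁻¹ : Matrix.SpecialLinearGroup (Fin 2) (ZMod p)) :
      Matrix (Fin 2) (Fin 2) (ZMod p)) = Matrix.adjugate B := Matrix.SpecialLinearGroup.coe_inv B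
  have h1 : X * A = A⁻¹ * X := by rwa [mul_inv_eq_iff_eq_mul] at hXA
  have h2 : X * B = B * X := by rwa [mul_inv_eq_iff_eq_mul] at hXB
  have h1' : (X : Matrix (Fin 2) (Fin 2) (ZMod p)) * A = (A⁻¹ : Matrix.SpecialLinearGroup (Fin 2) (ZMod p)) * X := by
    exact_mod_cast congrArg Subtype.val h1
  have h2' : (X : Matrix (Fin 2) (Fin 2) (ZMod p)) * B = (B : Matrix (Fin 2) (Fin 2) (ZMod p)) * X := by
    exact_mod_cast congrArg Subtype.val h2
  set x00 := (X : Matrix (Fin 2) (Fin 2) (ZMod p)) 0 0 with hx00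
  set x01 := (X : Matrix (Fin 2) (Fin 2) (ZMod p)) 0 1 with hx01
  set x10 := (X : Matrix (Fin 2) (Fin 2) (ZMod p)) 1 0 with hx10
  set x11 := (X : Matrix (Fin 2) (Fin 2) (ZMod p)) 1 1 with hx11
  set a := (B : Matrix (Fin 2) (Fin 2) (ZMod p)) 0 0 with ha
  set b := (B : Matrix (Fin 2) (Fin 2) (ZMod p)) 0 1 with hb
  set c := (B : Matrix (Fin 2) (Fin 2) (ZMod p)) 1 0 with hc
  set d := (B : Matrix (Fin 2) (Fin 2) (ZMod p)) 1 1 with hd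
  have hXeta : (X : Matrix (Fin 2) (Fin 2) (ZMod p)) = !![x00, x01; x10, x11] :=
    Matrix.etaExpand_eq (X : Matrix (Fin 2) (Fin 2) (ZMod p)) ▸ rfl
  have hBeta : (B : Matrix (Fin 2) (Fin 2) (ZMod p)) = !![a, b; c, d] :=
    Matrix.etaExpand_eq (B : Matrix (Fin 2) (Fin 2) (ZMod p)) ▸ rfl
  have huu : u * u⁻¹ = 1 := mul_inv_cancel₀ hu0
  have hsub : u - u⁻¹ ≠ 0 := by
    intro h
    have h2 : u * u = 1 := by
      have := sub_eq_zero.mp h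
      calc u * u = u * u⁻¹ := by rw [← this]
      _ = 1 := huu
    rcases mul_self_eq_one_iff.mp h2 with h3 | h3
    · exact hu1 h3
    · exact hum1 h3
  rw [hXeta, hA, hAinv, Matrix.mul_fin_two, Matrix.mul_fin_two, ← Matrix.ext_iff] at h1'
  have e00 := h1' 0 0
  have e11 := h1' 1 1
  simp at e00 e11
  have hx00z : x00 = 0 := by
    rcases mul_eq_zero.mp (show x00 * (u - u⁻¹) = 0 by linear_combination e00) with h | h
    · exact h
    · exact absurd h hsub
  have hx11z : x11 = 0 := by
    rcases mul_eq_zero.mp (show x11 * (u - u⁻¹) = 0 by linear_combination -e11) with h | h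
    · exact h
    · exact absurd h hsub
  have hdetX : x00 * x11 - x01 * x10 = 1 := by
    have h := X.property
    rw [Matrix.det_fin_two] at h
    exact h
  have hx0110 : x01 * x10 = -1 := by
    rw [hx00z, hx11z] at hdetX; linear_combination -hdetX
  have hdetB : a * d - b * c = 1 := by
    have h := B.property
    rw [Matrix.det_fin_two] at h
    exact h
  rw [hXeta, hBeta, Matrix.mul_fin_two, Matrix.mul_fin_two, ← Matrix.ext_iff] at h2'
  have f00 := h2' 0 0
  simp [hx00z] at f00
  -- f00 : x01 * c = b * x10
  have hbval : b = -x01 ^ 2 * c := by linear_combination x01 * f00 + b * hx0110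
  refine ⟨(u - u⁻¹) * c * x01, ?_⟩
  have hcoe : ((A * B * A⁻¹ * B⁻¹ : Matrix.SpecialLinearGroup (Fin 2) (ZMod p)) :
      Matrix (Fin 2) (Fin 2) (ZMod p)) =
      !![u, 0; 0, u⁻¹] * !![a, b; c, d] * !![u⁻¹, 0; 0, u] * !![d, -b; -c, a] := by
    rw [Matrix.SpecialLinearGroup.coe_mul, Matrix.SpecialLinearGroup.coe_mul,
      Matrix.SpecialLinearGroup.coe_mul, hA, hBeta, hAinv, hBinv, hBeta,
      Matrix.adjugate_fin_two]
    simp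
  rw [hcoe, Matrix.mul_fin_two, Matrix.mul_fin_two, Matrix.mul_fin_two, Matrix.trace_fin_two]
  simp only [Matrix.cons_val_zero, Matrix.cons_val_one, Matrix.head_cons, Matrix.cons_val',
    Matrix.empty_val', Matrix.cons_val_fin_one, Matrix.of_apply, Matrix.vecHead, Matrix.vecTail]
  ring_nf
  linear_combination ((2 * (u * u⁻¹) - u ^ 2 - u⁻¹ ^ 2) * c) * hbval + (2 * (u * u⁻¹)) * hdetB +
    2 * huu
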